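/- arXiv:1604.08291 — 3 statements merged into one kernel-verified Lean document; each statement's English description precedes it below -/
import Mathlib

section
/- Let E be a real inner product space, let g : E → ℝ be convex, let C₂ > 0, and define f(Z) = g(Z) + C₂‖Z‖². Let θ ≥ 0 and let h : E → ℝ be Lipschitz with constant θ. If Z* is a global minimizer of f and Z' is a global minimizer of f + h, then ‖Z' − Z*‖ ≤ θ / C₂. -/
/-- stability of the minimizer of the ridge-regularized convex
objective `f Z = g Z + C₂‖Z‖²` under a Lipschitz perturbation `h`:
`‖Z' − Z*‖ ≤ θ / C₂`. -/
theorem minimizer_stability_under_lipschitz_perturbation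
    {E : Type*} [NormedAddCommGroup E] [InnerProductSpace ℝ E]
    (g : E → ℝ) (hg : ConvexOn ℝ Set.univ g)
    (C₂ : ℝ) (hC₂ : 0 < C₂)
    (f : E → ℝ) (hf : ∀ Z, f Z = g Z + C₂ * ‖Z‖ ^ 2)
    (θ : ℝ) (hθ : 0 ≤ θ)
    (h : E → ℝ) (hLip : ∀ Z₁ Z₂ : E, |h Z₁ - h Z₂| ≤ θ * ‖Z₁ - Z₂‖)
    (Zstar : E) (hmin : ∀ Z, f Zstar ≤ f Z)
    (Z' : E) (hmin' : ∀ Z, f Z' + h Z' ≤ f Z + h Z) :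
    ‖Z' - Zstar‖ ≤ θ / C₂ := by
  set d : ℝ := ‖Z' - Zstar‖ with hd
  have hd0 : 0 ≤ d := norm_nonneg _
  -- suboptimality transfer
  have hsum : f Z' - f Zstar ≤ θ * d := by
    have h1 := hmin' Zstar
    have h2 := (abs_le.mp (hLip Zstar Z')).2
    have h3 : ‖Zstar - Z'‖ = d := by rw [hd, norm_sub_rev]
    rw [h3] at h2
    linarith
  -- quadratic growth along segment
  have key : ∀ t : ℝ, 0 < t → t < 1 → C₂ * (1 - t) * d ^ 2 ≤ θ * d := by
    intro t ht ht1
    have hgc := hg.2 (Set.mem_univ Zstar) (Set.mem_univ Z')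
      (by linarith : (0:ℝ) ≤ 1 - t) ht.le (by ring)
    have hnorm : ‖(1 - t) • Zstar + t • Z'‖ ^ 2
        = (1 - t) * ‖Zstar‖ ^ 2 + t * ‖Z'‖ ^ 2 - t * (1 - t) * ‖Z' - Zstar‖ ^ 2 := by
      simp only [← real_inner_self_eq_norm_sq]
      simp only [inner_add_left, inner_add_right, inner_smul_left, inner_smul_right,
        inner_sub_left, inner_sub_right, starRingEnd_apply, star_trivial,
        real_inner_comm Z' Zstar]
      ring
    have hm := hmin ((1 - t) • Zstar + t • Z')
    rw [hf, hf] at hm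
    rw [hnorm] at hm
    have hZ' := hf Z'
    have hZs := hf Zstar
    simp only [smul_eq_mul] at hgc
    have hmul := mul_le_mul_of_nonneg_left hsum ht.le
    nlinarith [hm, hgc, hmul, mul_pos hC₂ ht]
  by_contra hcon
  push_neg at hcon
  have hdpos : 0 < d := lt_of_le_of_lt (div_nonneg hθ hC₂.le) hcon
  have hgt : θ < C₂ * d := by
    rw [div_lt_iff₀ hC₂] at hcon; linarith [hcon]
  set t : ℝ := (C₂ * d - θ) / (2 * (C₂ * d)) with htdef
  have hcd : 0 < C₂ * d := mul_pos hC₂ hdpos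
  have ht0 : 0 < t := div_pos (by linarith) (by linarith)
  have ht1 : t < 1 := by
    rw [div_lt_one (by linarith)]; linarith
  have hk := key t ht0 ht1
  have htval : C₂ * (1 - t) * d = (C₂ * d + θ) / 2 := by
    field_simp [htdef]
    rw [htdef]; field_simp; ring
  nlinarith [hk, htval]
end

section
/- Let E be a real vector space with a norm ‖·‖, let L ≥ 0, let ℓ₁, ℓ₂, … : E → ℝ each be Lipschitz with constant L, let C₂ ∈ ℝ, and for each m ≥ 1 define J_m(Z) = (1/m)·Σ_{v=1}^{m} ℓ_v(Z) + C₂‖Z‖². Then for every m ≥ 2, the function Z ↦ J_m(Z) − J_{m−1}(Z) is Lipschitz with constant 2L/m. -/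
/-- if each per-view loss `ℓ_v` is Lipschitz with constant `L`, then
`J_m − J_{m−1}` is Lipschitz with constant `2L/m`. -/
theorem streaming_objective_difference_lipschitz
    {E : Type*} [NormedAddCommGroup E] [Module ℝ E]
    (L : ℝ) (hL : 0 ≤ L)
    (ℓ : ℕ → E → ℝ) (hLip : ∀ v, ∀ Z₁ Z₂ : E, |ℓ v Z₁ - ℓ v Z₂| ≤ L * ‖Z₁ - Z₂‖)
    (C₂ : ℝ) (J : ℕ → E → ℝ)
    (hJ : ∀ m, 1 ≤ m → ∀ Z : E,
      J m Z = (1 / (m : ℝ)) * ∑ v ∈ Finset.Icc 1 m, ℓ v Z + C₂ * ‖Z‖ ^ 2) :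
    ∀ m, 2 ≤ m → ∀ Z₁ Z₂ : E,
      |(J m Z₁ - J (m - 1) Z₁) - (J m Z₂ - J (m - 1) Z₂)| ≤
        (2 * L / (m : ℝ)) * ‖Z₁ - Z₂‖ := by
  intro m hm Z₁ Z₂
  obtain ⟨k, rfl⟩ : ∃ k, m = k + 2 := ⟨m - 2, by omega⟩
  set c : ℝ := L * ‖Z₁ - Z₂‖ with hc
  have hc0 : 0 ≤ c := mul_nonneg hL (norm_nonneg _)
  rw [hJ (k + 2) (by omega) Z₁, hJ (k + 2) (by omega) Z₂,
    hJ (k + 2 - 1) (by omega) Z₁, hJ (k + 2 - 1) (by omega) Z₂]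
  have hsub : k + 2 - 1 = k + 1 := by omega
  rw [hsub]
  set T : ℝ := ∑ v ∈ Finset.Icc 1 (k + 1), (ℓ v Z₁ - ℓ v Z₂) with hT
  have hTbound : |T| ≤ (k + 1 : ℝ) * c := by
    calc |T| ≤ ∑ v ∈ Finset.Icc 1 (k + 1), |ℓ v Z₁ - ℓ v Z₂| :=
          Finset.abs_sum_le_sum_abs _ _
      _ ≤ ∑ v ∈ Finset.Icc 1 (k + 1), c := Finset.sum_le_sum fun v _ => hLip v Z₁ Z₂
      _ = (k + 1 : ℝ) * c := by
          rw [Finset.sum_const, Nat.card_Icc]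
          push_cast
          ring_nf
  have hΔ : |ℓ (k + 2) Z₁ - ℓ (k + 2) Z₂| ≤ c := hLip (k + 2) Z₁ Z₂
  have hsum1 : ∑ v ∈ Finset.Icc 1 (k + 2), ℓ v Z₁
      = (∑ v ∈ Finset.Icc 1 (k + 1), ℓ v Z₁) + ℓ (k + 2) Z₁ :=
    Finset.sum_Icc_succ_top (by omega) _
  have hsum2 : ∑ v ∈ Finset.Icc 1 (k + 2), ℓ v Z₂
      = (∑ v ∈ Finset.Icc 1 (k + 1), ℓ v Z₂) + ℓ (k + 2) Z₂ :=
    Finset.sum_Icc_succ_top (by omega) _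
  have hTsplit : T = (∑ v ∈ Finset.Icc 1 (k + 1), ℓ v Z₁)
      - ∑ v ∈ Finset.Icc 1 (k + 1), ℓ v Z₂ := by
    rw [hT, Finset.sum_sub_distrib]
  have hm2 : (0:ℝ) < (k:ℝ) + 2 := by positivity
  have hm1 : (0:ℝ) < (k:ℝ) + 1 := by positivity
  have key : (1 / ((k + 2 : ℕ) : ℝ)) * ∑ v ∈ Finset.Icc 1 (k + 2), ℓ v Z₁ + C₂ * ‖Z₁‖ ^ 2
      - ((1 / ((k + 1 : ℕ) : ℝ)) * ∑ v ∈ Finset.Icc 1 (k + 1), ℓ v Z₁ + C₂ * ‖Z₁‖ ^ 2)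
      - ((1 / ((k + 2 : ℕ) : ℝ)) * ∑ v ∈ Finset.Icc 1 (k + 2), ℓ v Z₂ + C₂ * ‖Z₂‖ ^ 2
      - ((1 / ((k + 1 : ℕ) : ℝ)) * ∑ v ∈ Finset.Icc 1 (k + 1), ℓ v Z₂ + C₂ * ‖Z₂‖ ^ 2))
      = (1 / ((k:ℝ) + 2)) * (ℓ (k + 2) Z₁ - ℓ (k + 2) Z₂)
        - (1 / (((k:ℝ) + 2) * ((k:ℝ) + 1))) * T := by
    rw [hsum1, hsum2, hTsplit]
    push_cast
    field_simp
    ring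
  rw [key]
  have h1 : |(1 / ((k:ℝ) + 2)) * (ℓ (k + 2) Z₁ - ℓ (k + 2) Z₂)| ≤ (1 / ((k:ℝ) + 2)) * c := by
    rw [abs_mul, abs_of_pos (by positivity)]
    exact mul_le_mul_of_nonneg_left hΔ (by positivity)
  have h2 : |(1 / (((k:ℝ) + 2) * ((k:ℝ) + 1))) * T| ≤ (1 / ((k:ℝ) + 2)) * c := by
    rw [abs_mul, abs_of_pos (by positivity : (0:ℝ) < 1 / (((k:ℝ) + 2) * ((k:ℝ) + 1)))]
    calc (1 / (((k:ℝ) + 2) * ((k:ℝ) + 1))) * |T|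
        ≤ (1 / (((k:ℝ) + 2) * ((k:ℝ) + 1))) * (((k:ℝ) + 1) * c) :=
          mul_le_mul_of_nonneg_left hTbound (by positivity)
      _ = (1 / ((k:ℝ) + 2)) * c := by field_simp
  calc |(1 / ((k:ℝ) + 2)) * (ℓ (k + 2) Z₁ - ℓ (k + 2) Z₂)
        - (1 / (((k:ℝ) + 2) * ((k:ℝ) + 1))) * T|
      ≤ |(1 / ((k:ℝ) + 2)) * (ℓ (k + 2) Z₁ - ℓ (k + 2) Z₂)|
        + |(1 / (((k:ℝ) + 2) * ((k:ℝ) + 1))) * T| := abs_sub _ _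
    _ ≤ (1 / ((k:ℝ) + 2)) * c + (1 / ((k:ℝ) + 2)) * c := add_le_add h1 h2
    _ = (2 * L / ((k + 2 : ℕ) : ℝ)) * ‖Z₁ - Z₂‖ := by
        push_cast
        rw [hc]
        field_simp
        ring
end

section
/- (Theorem 1, made precise.) Let E be a real inner product space, let L ≥ 0 and C₂ > 0, and let ℓ₁, ℓ₂, … : E → ℝ each be convex and Lipschitz with constant L. For each m ≥ 1 define J_m(Z) = (1/m)·Σ_{v=1}^{m} ℓ_v(Z) + C₂‖Z‖², and suppose Z^m is a global minimizer of J_m for each m. Then for every m ≥ 2, ‖Z^m − Z^{m−1}‖ ≤ 2L/(C₂·m); in particular ‖Z^m − Z^{m−1}‖ = O(1/m). -/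
private lemma convexOn_finset_sum' {E : Type*} [NormedAddCommGroup E]
    [InnerProductSpace ℝ E] (t : Finset ℕ) (f : ℕ → E → ℝ)
    (h : ∀ i, ConvexOn ℝ Set.univ (f i)) :
    ConvexOn ℝ Set.univ (fun x => ∑ i ∈ t, f i x) := by
  classical
  induction t using Finset.induction with
  | empty => simpa using convexOn_const (0:ℝ) convex_univ
  | insert _ _ hi ih =>
      simp only [Finset.sum_insert hi]; exact (h _).add ih

/-- Strong-convexity stability of the minimizer: if `g` is convex and `x`
minimizes `z ↦ g z + C₂‖z‖²`, then `C₂‖x - y‖² ≤ 2((g y + C₂‖y‖²) - (g x + C₂‖x‖²))`. -/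
private lemma strong_min' {E : Type*} [NormedAddCommGroup E] [InnerProductSpace ℝ E]
    (C₂ : ℝ) (g : E → ℝ) (hg : ConvexOn ℝ Set.univ g)
    (x : E) (hx : ∀ z, g x + C₂ * ‖x‖ ^ 2 ≤ g z + C₂ * ‖z‖ ^ 2) (y : E) :
    C₂ * ‖x - y‖ ^ 2 ≤ 2 * ((g y + C₂ * ‖y‖ ^ 2) - (g x + C₂ * ‖x‖ ^ 2)) := by
  have hz := hx ((1/2 : ℝ) • x + (1/2 : ℝ) • y)
  have hgz : g ((1/2 : ℝ) • x + (1/2 : ℝ) • y) ≤ (1/2) * g x + (1/2) * g y := by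
    have := hg.2 (Set.mem_univ x) (Set.mem_univ y) (by norm_num : (0:ℝ) ≤ 1/2)
      (by norm_num : (0:ℝ) ≤ 1/2) (by norm_num)
    simpa [smul_eq_mul] using this
  have hpar := parallelogram_law_with_norm ℝ x y
  have hmideq : ‖(1/2 : ℝ) • x + (1/2 : ℝ) • y‖ ^ 2
      = (‖x‖ ^ 2 + ‖y‖ ^ 2) / 2 - ‖x - y‖ ^ 2 / 4 := by
    have h1 : (1/2 : ℝ) • x + (1/2 : ℝ) • y = (1/2 : ℝ) • (x + y) := by
      rw [smul_add]
    rw [h1, norm_smul]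
    have : ‖(1/2 : ℝ)‖ = 1/2 := by
      rw [Real.norm_eq_abs]; norm_num
    rw [this]
    nlinarith [hpar, norm_nonneg (x + y), norm_nonneg (x - y)]
  have hmul : C₂ * ‖(1/2 : ℝ) • x + (1/2 : ℝ) • y‖ ^ 2
      = C₂ * ((‖x‖ ^ 2 + ‖y‖ ^ 2) / 2 - ‖x - y‖ ^ 2 / 4) := by rw [hmideq]
  linarith [hz, hgz, hmul.le, hmul.ge]

/-- Theorem 1 of the paper, made precise: for convex `L`-Lipschitz
per-view losses and `C₂ > 0`, the minimizers `Z^m` of the streaming-view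
objectives `J_m(Z) = (1/m)·Σ_{v=1}^m ℓ_v(Z) + C₂‖Z‖²` satisfy
`‖Z^m − Z^{m−1}‖ ≤ 2L/(C₂·m)`, i.e. `‖Z^m − Z^{m−1}‖ = O(1/m)`. -/
theorem streaming_minimizers_stability
    {E : Type*} [NormedAddCommGroup E] [InnerProductSpace ℝ E]
    (L : ℝ) (hL : 0 ≤ L) (C₂ : ℝ) (hC₂ : 0 < C₂)
    (ℓ : ℕ → E → ℝ)
    (hConv : ∀ v, ConvexOn ℝ Set.univ (ℓ v))
    (hLip : ∀ v, ∀ Z₁ Z₂ : E, |ℓ v Z₁ - ℓ v Z₂| ≤ L * ‖Z₁ - Z₂‖)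
    (J : ℕ → E → ℝ)
    (hJ : ∀ m, 1 ≤ m → ∀ Z : E,
      J m Z = (1 / (m : ℝ)) * ∑ v ∈ Finset.Icc 1 m, ℓ v Z + C₂ * ‖Z‖ ^ 2)
    (Zseq : ℕ → E) (hmin : ∀ m, 1 ≤ m → ∀ Z : E, J m (Zseq m) ≤ J m Z) :
    ∀ m, 2 ≤ m → ‖Zseq m - Zseq (m - 1)‖ ≤ 2 * L / (C₂ * (m : ℝ)) := by
  intro m hm
  obtain ⟨n, rfl⟩ : ∃ n, m = n + 1 := ⟨m - 1, by omega⟩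
  have hn : 1 ≤ n := by omega
  have hn1 : 1 ≤ n + 1 := by omega
  simp only [Nat.add_sub_cancel]
  set x := Zseq (n + 1) with hxdef
  set y := Zseq n with hydef
  set d := ‖x - y‖ with hddef
  have hd0 : 0 ≤ d := norm_nonneg _
  have hnR : (1 : ℝ) ≤ (n : ℝ) := by exact_mod_cast hn
  have hnpos : (0 : ℝ) < (n : ℝ) := by linarith
  have hmR : (0 : ℝ) < ((n : ℝ) + 1) := by linarith
  -- the convex parts
  set g₁ : E → ℝ := fun Z => (1 / ((n : ℝ) + 1)) * ∑ v ∈ Finset.Icc 1 (n + 1), ℓ v Z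
    with hg₁def
  set g₂ : E → ℝ := fun Z => (1 / (n : ℝ)) * ∑ v ∈ Finset.Icc 1 n, ℓ v Z with hg₂def
  have hconv₁ : ConvexOn ℝ Set.univ g₁ := by
    have := (convexOn_finset_sum' (Finset.Icc 1 (n + 1)) ℓ hConv).smul
      (c := 1 / ((n : ℝ) + 1)) (by positivity)
    simpa [hg₁def, smul_eq_mul] using this
  have hconv₂ : ConvexOn ℝ Set.univ g₂ := by
    have := (convexOn_finset_sum' (Finset.Icc 1 n) ℓ hConv).smul
      (c := 1 / (n : ℝ)) (by positivity)
    simpa [hg₂def, smul_eq_mul] using this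
  -- rewrite J via hJ
  have hJ₁ : ∀ Z : E, J (n + 1) Z = g₁ Z + C₂ * ‖Z‖ ^ 2 := by
    intro Z; rw [hJ (n + 1) hn1 Z]; push_cast; rfl
  have hJ₂ : ∀ Z : E, J n Z = g₂ Z + C₂ * ‖Z‖ ^ 2 := by
    intro Z; rw [hJ n hn Z]
  -- strong convexity inequalities
  have hA : C₂ * ‖x - y‖ ^ 2 ≤ 2 * ((g₁ y + C₂ * ‖y‖ ^ 2) - (g₁ x + C₂ * ‖x‖ ^ 2)) := by
    refine strong_min' C₂ g₁ hconv₁ x (fun z => ?_) y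
    have := hmin (n + 1) hn1 z
    rw [hJ₁ (Zseq (n + 1)), hJ₁ z] at this
    exact this
  have hB : C₂ * ‖y - x‖ ^ 2 ≤ 2 * ((g₂ x + C₂ * ‖x‖ ^ 2) - (g₂ y + C₂ * ‖y‖ ^ 2)) := by
    refine strong_min' C₂ g₂ hconv₂ y (fun z => ?_) x
    have := hmin n hn z
    rw [hJ₂ (Zseq n), hJ₂ z] at this
    exact this
  have hyx : ‖y - x‖ = d := by rw [hddef, norm_sub_rev]
  rw [hyx] at hB
  -- combine: C₂ d² ≤ (g₁ y - g₂ y) - (g₁ x - g₂ x)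
  have hcomb : C₂ * d ^ 2 ≤ (g₁ y - g₂ y) - (g₁ x - g₂ x) := by
    have := add_le_add hA hB
    nlinarith [this]
  -- bound the difference using Lipschitz
  set S : E → ℝ := fun Z => ∑ v ∈ Finset.Icc 1 n, ℓ v Z with hSdef
  have hsplit : ∀ Z : E, ∑ v ∈ Finset.Icc 1 (n + 1), ℓ v Z = S Z + ℓ (n + 1) Z := by
    intro Z
    exact Finset.sum_Icc_succ_top (by omega) (fun v => ℓ v Z)
  have hDiff : ∀ Z : E, g₁ Z - g₂ Z
      = (1 / ((n : ℝ) + 1)) * ℓ (n + 1) Z - (1 / ((n : ℝ) * ((n : ℝ) + 1))) * S Z := by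
    intro Z
    rw [hg₁def, hg₂def]
    simp only [hsplit Z]
    field_simp
    ring
  have hSlip : |S y - S x| ≤ (n : ℝ) * (L * d) := by
    rw [hSdef]
    simp only
    rw [← Finset.sum_sub_distrib]
    calc |∑ v ∈ Finset.Icc 1 n, (ℓ v y - ℓ v x)|
        ≤ ∑ v ∈ Finset.Icc 1 n, |ℓ v y - ℓ v x| := Finset.abs_sum_le_sum_abs _ _
      _ ≤ ∑ v ∈ Finset.Icc 1 n, L * d := by
          refine Finset.sum_le_sum fun v _ => ?_
          have := hLip v y x
          rwa [hyx] at this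
      _ = (n : ℝ) * (L * d) := by
          rw [Finset.sum_const, Nat.card_Icc]
          simp [nsmul_eq_mul]
  have hℓlip : |ℓ (n + 1) y - ℓ (n + 1) x| ≤ L * d := by
    have := hLip (n + 1) y x
    rwa [hyx] at this
  have hbound : (g₁ y - g₂ y) - (g₁ x - g₂ x) ≤ 2 * L * d / ((n : ℝ) + 1) := by
    rw [hDiff y, hDiff x]
    have h1 : (1 / ((n : ℝ) + 1)) * (ℓ (n + 1) y - ℓ (n + 1) x)
        ≤ (1 / ((n : ℝ) + 1)) * (L * d) := by
      apply mul_le_mul_of_nonneg_left _ (by positivity)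
      exact le_trans (le_abs_self _) hℓlip
    have h2 : -((1 / ((n : ℝ) * ((n : ℝ) + 1))) * (S y - S x))
        ≤ (1 / ((n : ℝ) * ((n : ℝ) + 1))) * ((n : ℝ) * (L * d)) := by
      rw [neg_mul_eq_mul_neg]
      apply mul_le_mul_of_nonneg_left _ (by positivity)
      exact le_trans (neg_le_abs _) hSlip
    have heq : (1 / ((n : ℝ) * ((n : ℝ) + 1))) * ((n : ℝ) * (L * d))
        = (1 / ((n : ℝ) + 1)) * (L * d) := by
      field_simp
    have h3 : (1 / ((n : ℝ) + 1)) * (L * d) + (1 / ((n : ℝ) + 1)) * (L * d)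
        = 2 * L * d / ((n : ℝ) + 1) := by ring
    nlinarith [h1, h2, heq]
  -- conclude
  have key : C₂ * d ^ 2 ≤ 2 * L * d / ((n : ℝ) + 1) := le_trans hcomb hbound
  have hcast : ((n + 1 : ℕ) : ℝ) = (n : ℝ) + 1 := by push_cast; ring
  rw [hcast]
  rcases eq_or_lt_of_le hd0 with hd | hd
  · show d ≤ 2 * L / (C₂ * ((n : ℝ) + 1))
    rw [← hd]
    positivity
  · show d ≤ 2 * L / (C₂ * ((n : ℝ) + 1))
    have key' : C₂ * d ^ 2 * ((n : ℝ) + 1) ≤ 2 * L * d := by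
      have h := mul_le_mul_of_nonneg_right key hmR.le
      rw [div_mul_cancel₀] at h
      · exact h
      · exact ne_of_gt hmR
    rw [le_div_iff₀ (by positivity)]
    nlinarith [key', hd, sq_nonneg d]
end
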